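/- For n ≥ 1 and the powerset Boolean algebra B of an m-element set, the set Boo_n^B of Boolean snapshots (snapshots z with z₁ ∧ z₂ = 0) has exactly 2^m elements. -/

import Mathlib

def IsSnapshot {B : Type*} [BooleanAlgebra B] (n : ℕ) (z : Fin (n + 1) → B) : Prop :=
  ∀ k : Fin (n + 1), 1 ≤ (k : ℕ) → (Finset.Iio k).inf z ⊔ z k = ⊤

theorem stmt6 (m n : ℕ) (hn : 1 ≤ n) :
    Nat.card {z : Fin (n + 1) → Finset (Fin m) //
        IsSnapshot n z ∧ z 0 ⊓ z 1 = ⊥} = 2 ^ m := by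
  obtain ⟨n, rfl⟩ := Nat.exists_eq_add_of_le' hn
  have h01 : (0 : Fin (n + 1 + 1)) ≠ 1 := by
    simp [Fin.ext_iff]
  have hIio1 : (Finset.Iio (1 : Fin (n + 1 + 1))) = {0} := by
    ext i
    simp [Finset.mem_Iio, Fin.lt_one_iff]
  have hmem0 : ∀ k : Fin (n + 1 + 1), 2 ≤ (k : ℕ) →
      (0 : Fin (n+1+1)) ∈ Finset.Iio k ∧ (1 : Fin (n+1+1)) ∈ Finset.Iio k := by
    intro k hk
    constructor <;> simp only [Finset.mem_Iio, Fin.lt_def, Fin.val_zero, Fin.val_one] <;> omega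
  have key : ∀ z : Fin (n+1+1) → Finset (Fin m),
      (IsSnapshot (n+1) z ∧ z 0 ⊓ z 1 = ⊥) ↔
      (z 1 = (z 0)ᶜ ∧ ∀ k : Fin (n+1+1), 2 ≤ (k:ℕ) → z k = ⊤) := by
    intro z
    constructor
    · rintro ⟨hs, hb⟩
      have h1 := hs 1 (by simp)
      rw [hIio1] at h1
      simp only [Finset.inf_singleton] at h1
      have hc : IsCompl (z 0) (z 1) :=
        ⟨disjoint_iff.mpr hb, codisjoint_iff.mpr h1⟩
      refine ⟨hc.compl_eq.symm, ?_⟩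
      intro k hk
      obtain ⟨m0, m1⟩ := hmem0 k hk
      have hinf : (Finset.Iio k).inf z = ⊥ := by
        refine le_antisymm ?_ bot_le
        calc (Finset.Iio k).inf z ≤ z 0 ⊓ z 1 :=
              le_inf (Finset.inf_le m0) (Finset.inf_le m1)
          _ = ⊥ := hb
      have h2 := hs k (by omega)
      rw [hinf, bot_sup_eq] at h2
      exact h2
    · rintro ⟨h1, h2⟩
      constructor
      · intro k hk
        rcases Nat.lt_or_ge (k : ℕ) 2 with hlt | hge
        · have hk1 : k = 1 := by
            apply Fin.ext
            simp only [Fin.val_one]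
            omega
          subst hk1
          rw [hIio1]
          simp [h1]
        · rw [h2 k hge]
          simp
      · rw [h1]; simp
  have hbij : Function.Bijective
      (fun z : {z : Fin (n + 1 + 1) → Finset (Fin m) //
        IsSnapshot (n + 1) z ∧ z 0 ⊓ z 1 = ⊥} => z.1 0) := by
    constructor
    · rintro ⟨z, hz⟩ ⟨w, hw⟩ h
      simp only at h
      obtain ⟨hz1, hz2⟩ := (key z).mp hz
      obtain ⟨hw1, hw2⟩ := (key w).mp hw
      apply Subtype.ext
      funext i
      show z i = w i
      rcases Nat.lt_or_ge (i : ℕ) 2 with hlt | hge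
      · rcases Nat.lt_or_ge (i : ℕ) 1 with hlt1 | hge1
        · have : i = 0 := Fin.ext (by simpa using hlt1)
          subst this; exact h
        · have : i = 1 := Fin.ext (by simp; omega)
          subst this; rw [hz1, hw1, h]
      · rw [hz2 i hge, hw2 i hge]
    · intro s
      refine ⟨⟨fun i => if i = 0 then s else if i = 1 then sᶜ else ⊤, ?_⟩, by simp⟩
      rw [key]
      constructor
      · simp [h01.symm]
      · intro k hk
        have hk0 : k ≠ 0 := by
          intro h; subst h; simp at hk
        have hk1 : k ≠ 1 := by
          intro h; subst h; simp [Fin.val_one] at hk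
        simp [hk0, hk1]
  rw [Nat.card_eq_of_bijective _ hbij]
  simp [Nat.card_eq_fintype_card, Fintype.card_finset]
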